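/- Let M be a matroid on a finite linearly ordered ground set E. Every independent set I of M can be uniquely written as I = B \ Y for a basis B and a subset Y ⊆ IA(B). Equivalently, the intervals [B \ IA(B), B], as B ranges over the bases of M, partition the independence complex of M. -/

import Mathlib

open Set

variable {α : Type*}

/-- A circuit of a matroid: a minimal dependent set. -/
def Matroid.Cct (M : Matroid α) (C : Set α) : Prop :=
  M.Dep C ∧ ∀ D ⊂ C, ¬ M.Dep D

/-- The externally active elements with respect to `S`: elements `e ∈ E \ S` that are the
maximum of some circuit contained in `S ∪ {e}`. -/
def Matroid.exA [LinearOrder α] (M : Matroid α) (S : Set α) : Set α :=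
  {e | e ∈ M.E \ S ∧ ∃ C, M.Cct C ∧ C ⊆ insert e S ∧ ∀ f ∈ C, f ≤ e}

/-- The externally passive elements with respect to `S`. -/
def Matroid.exP [LinearOrder α] (M : Matroid α) (S : Set α) : Set α :=
  (M.E \ S) \ M.exA S

/-- The internally active elements with respect to `S`: elements of `S` that are externally
active with respect to `E \ S` in the dual matroid. -/
def Matroid.inA [LinearOrder α] (M : Matroid α) (S : Set α) : Set α :=
  {i | i ∈ S ∧ i ∈ M✶.exA (M.E \ S)}

/-- The internally passive elements with respect to `S`. -/
def Matroid.inP [LinearOrder α] (M : Matroid α) (S : Set α) : Set α :=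
  S \ M.inA S

/-- `I` is internally related to the basis `B` if `I = B \ Y` for some `Y ⊆ IA(B)`. -/
def Matroid.IntRelated [LinearOrder α] (M : Matroid α) (I B : Set α) : Prop :=
  M.IsBase B ∧ ∃ Y ⊆ M.inA B, I = B \ Y

/-- The external/internal order on independent sets. -/
def Matroid.extIntLE [LinearOrder α] (M : Matroid α) (I J : Set α) : Prop :=
  ((∃ B, M.IntRelated I B ∧ M.IntRelated J B) ∧ I ⊆ J) ∨
  ((¬ ∃ B, M.IntRelated I B ∧ M.IntRelated J B) ∧
    (I \ M.inA I) ∪ M.exA I ⊆ (J \ M.inA J) ∪ M.exA J)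

namespace CrapoAux

/-- Every finite dependent set contains a circuit. -/
lemma exists_cct_subset (M : Matroid α) :
    ∀ n {D : Set α}, D.Finite → D.ncard ≤ n → M.Dep D → ∃ C ⊆ D, M.Cct C := by
  intro n
  induction n with
  | zero =>
    intro D hfin hcard hD
    by_cases h : ∀ D' ⊂ D, ¬ M.Dep D'
    · exact ⟨D, Subset.rfl, hD, h⟩
    · push_neg at h
      obtain ⟨D', hss, hD'⟩ := h
      have := Set.ncard_lt_ncard hss hfin
      omega
  | succ n ih =>
    intro D hfin hcard hD
    by_cases h : ∀ D' ⊂ D, ¬ M.Dep D'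
    · exact ⟨D, Subset.rfl, hD, h⟩
    · push_neg at h
      obtain ⟨D', hss, hD'⟩ := h
      have hlt := Set.ncard_lt_ncard hss hfin
      obtain ⟨C, hCD', hC⟩ := ih (hfin.subset hss.subset) (by omega) hD'
      exact ⟨C, hCD'.trans hss.subset, hC⟩

/-- Circuit exchange: if `C` is a circuit inside `insert e B` for a base `B` and `f ∈ C`,
`f ≠ e`, then `insert e (B \ {f})` is a base. -/
lemma cct_exchange {M : Matroid α} (hE : M.E.Finite) {B C : Set α} {e f : α}
    (hB : M.IsBase B) (heE : e ∈ M.E) (heB : e ∉ B)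
    (hC : M.Cct C) (hCs : C ⊆ insert e B) (hfC : f ∈ C) (hfe : f ≠ e) :
    M.IsBase (insert e (B \ {f})) := by
  have hfB : f ∈ B := (hCs hfC).resolve_left hfe
  have hCE : C ⊆ M.E := hC.1.subset_ground
  have hCf_indep : M.Indep (C \ {f}) := by
    have hss : C \ {f} ⊂ C := by
      refine ⟨diff_subset, fun hsub => ?_⟩
      exact (hsub hfC).2 rfl
    have h2 := hC.2 _ hss
    rwa [M.not_dep_iff (diff_subset.trans hCE)] at h2
  have hfcl : f ∈ M.closure (C \ {f}) := by
    have h2 := hCf_indep.insert_dep_iff (e := f)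
    rw [Set.insert_diff_singleton, Set.insert_eq_self.mpr hfC] at h2
    exact (h2.mp hC.1).1
  have hXE : insert e (B \ {f}) ⊆ M.E := insert_subset heE (diff_subset.trans hB.subset_ground)
  have hCfX : C \ {f} ⊆ insert e (B \ {f}) := by
    rintro x ⟨hxC, hxf⟩
    rcases hCs hxC with rfl | hxB
    · exact mem_insert _ _
    · exact Or.inr ⟨hxB, hxf⟩
  have hBcl : B ⊆ M.closure (insert e (B \ {f})) := by
    intro b hb
    by_cases hbf : b = f
    · exact hbf ▸ M.closure_subset_closure hCfX hfcl
    · exact M.subset_closure _ hXE (Or.inr ⟨hb, hbf⟩)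
  have hsp : M.Spanning (insert e (B \ {f})) := by
    rw [M.spanning_iff_ground_subset_closure hXE]
    calc M.E = M.closure B := hB.closure_eq.symm
    _ ⊆ M.closure (M.closure (insert e (B \ {f}))) := M.closure_subset_closure hBcl
    _ = M.closure (insert e (B \ {f})) := M.closure_closure _
  obtain ⟨B2, hB2, hB2X⟩ := hsp.exists_isBase_subset
  have hXcard : (insert e (B \ {f})).encard = B.encard := by
    rw [Set.encard_insert_of_notMem (by simp [heB]),
      Set.encard_diff_singleton_add_one hfB]
  have hBX : B2 = insert e (B \ {f}) :=
    (hE.subset hXE).eq_of_subset_of_encard_le' hB2X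
      (by rw [hXcard, hB2.encard_eq_encard_of_isBase hB])
  rwa [← hBX]

/-- A circuit of the dual meets every base. -/
lemma dual_cct_inter_base_nonempty {M : Matroid α} {C B : Set α}
    (hC : M✶.Cct C) (hB : M.IsBase B) : (C ∩ B).Nonempty := by
  rw [Set.nonempty_iff_ne_empty]
  intro h
  have hCE : C ⊆ M.E := hC.1.subset_ground
  have hCB : C ⊆ M.E \ B := fun x hx =>
    ⟨hCE hx, fun hxB => (Set.eq_empty_iff_forall_notMem.mp h x ⟨hx, hxB⟩)⟩
  exact hC.1.not_indep (hB.compl_isBase_dual.indep.subset hCB)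

lemma crapo_aux [LinearOrder α] {M : Matroid α} {I B B' : Set α} {e : α}
    (hB' : M.IsBase B') (hIB' : I ⊆ B')
    (hact : B \ I ⊆ M.inA B) (he : e ∈ B \ B') : ∃ f ∈ B' \ B, f < e := by
  have heI : e ∉ I := fun h => he.2 (hIB' h)
  obtain ⟨heB, _, C, hC, hCs, hCle⟩ := hact ⟨he.1, heI⟩
  obtain ⟨f, hfC, hfB'⟩ := dual_cct_inter_base_nonempty hC hB'
  have hfe : f ≠ e := fun h => he.2 (h ▸ hfB')
  have hfB : f ∉ B := ((hCs hfC).resolve_left hfe).2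
  exact ⟨f, ⟨hfB', hfB⟩, lt_of_le_of_ne (hCle f hfC) hfe⟩

/-- Uniqueness of the base in Crapo's decomposition. -/
lemma crapo_base_unique [LinearOrder α] {M : Matroid α} (hE : M.E.Finite)
    {I B B' : Set α} (hB : M.IsBase B) (hB' : M.IsBase B') (hIB : I ⊆ B) (hIB' : I ⊆ B')
    (hact : B \ I ⊆ M.inA B) (hact' : B' \ I ⊆ M.inA B') : B = B' := by
  by_contra hne
  have hΔne : ((B \ B') ∪ (B' \ B)).Nonempty := by
    rw [Set.nonempty_iff_ne_empty]
    intro h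
    rw [Set.union_empty_iff, Set.diff_eq_empty, Set.diff_eq_empty] at h
    exact hne (h.1.antisymm h.2)
  have hΔfin : ((B \ B') ∪ (B' \ B)).Finite :=
    (hE.subset (union_subset (diff_subset.trans hB.subset_ground)
      (diff_subset.trans hB'.subset_ground)))
  obtain ⟨e, heΔ, hemin⟩ := Set.exists_min_image _ id hΔfin hΔne
  rcases heΔ with he | he
  · obtain ⟨f, hf, hfe⟩ := crapo_aux hB' hIB' hact he
    exact absurd (hemin f (Or.inr hf)) (not_le.mpr hfe)
  · obtain ⟨f, hf, hfe⟩ := crapo_aux hB hIB hact' he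
    exact absurd (hemin f (Or.inl hf)) (not_le.mpr hfe)

end CrapoAux

open CrapoAux in
/-- Every independent set is uniquely `B \ Y` with `B` a basis and `Y ⊆ IA(B)`. -/
theorem crapo_decomposition_indep [LinearOrder α] (M : Matroid α) [M.Finite]
    (I : Set α) (hI : M.Indep I) :
    ∃! p : Set α × Set α, M.IsBase p.1 ∧ p.2 ⊆ M.inA p.1 ∧ I = p.1 \ p.2 := by
  classical
  have hEfin : M.E.Finite := M.ground_finite
  set w : α → ℕ := fun x => (hEfin.toFinset.filter (· ≤ x)).card with hw
  set φ : Set α → ℕ := fun B => ∑ x ∈ hEfin.toFinset, B.indicator w x with hφ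
  have hwlt : ∀ {a b : α}, b ∈ M.E → a < b → w a < w b := by
    intro a b hbE hab
    apply Finset.card_lt_card
    constructor
    · intro x hx
      simp only [Finset.mem_filter] at hx ⊢
      exact ⟨hx.1, hx.2.trans hab.le⟩
    · intro hsub
      have hb : b ∈ hEfin.toFinset.filter (· ≤ b) := by simp [hbE]
      have h2 := hsub hb
      simp only [Finset.mem_filter] at h2
      exact absurd h2.2 (not_le.mpr hab)
  have hφlt : ∀ {B : Set α} {e f : α}, B ⊆ M.E → e ∈ B → f ∈ M.E → f ∉ B → e < f →
      φ B < φ (insert f (B \ {e})) := by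
    intro B e f hBE heB hfE hfB hef
    have hne : f ≠ e := ne_of_gt hef
    have heT : e ∈ hEfin.toFinset := by simp [hBE heB]
    have hfT : f ∈ hEfin.toFinset.erase e := by simp [hne, hfE]
    have key : ∀ (S : Set α), ∑ x ∈ hEfin.toFinset, S.indicator w x
        = S.indicator w e + (S.indicator w f
          + ∑ x ∈ (hEfin.toFinset.erase e).erase f, S.indicator w x) := by
      intro S
      rw [← Finset.add_sum_erase _ _ heT, ← Finset.add_sum_erase _ _ hfT]
    have hrest : ∑ x ∈ (hEfin.toFinset.erase e).erase f, (insert f (B \ {e})).indicator w x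
        = ∑ x ∈ (hEfin.toFinset.erase e).erase f, B.indicator w x := by
      refine Finset.sum_congr rfl (fun x hx => ?_)
      have hxf : x ≠ f := (Finset.mem_erase.mp hx).1
      have hxe : x ≠ e := (Finset.mem_erase.mp (Finset.mem_erase.mp hx).2).1
      simp only [Set.indicator_apply]
      refine if_congr ⟨?_, ?_⟩ rfl rfl
      · rintro (rfl | ⟨h1, _⟩)
        · exact absurd rfl hxf
        · exact h1
      · intro hxB
        exact Or.inr ⟨hxB, hxe⟩
    have heni : e ∉ insert f (B \ {e}) := fun h =>
      h.elim (fun h1 => (Ne.symm hne) h1) (fun h2 => h2.2 rfl)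
    simp only [hφ]
    rw [key B, key (insert f (B \ {e})), hrest, Set.indicator_of_mem heB w,
      Set.indicator_of_notMem heni w, Set.indicator_of_notMem hfB w,
      Set.indicator_of_mem (Set.mem_insert _ _) w]
    have hlt := hwlt hfE hef
    omega
  have hSfin : {B | M.IsBase B ∧ I ⊆ B}.Finite :=
    hEfin.finite_subsets.subset (fun B hB => hB.1.subset_ground)
  have hSne : {B | M.IsBase B ∧ I ⊆ B}.Nonempty := by
    obtain ⟨B, hB, hIB⟩ := hI.exists_isBase_superset
    exact ⟨B, hB, hIB⟩
  obtain ⟨B, ⟨hB, hIB⟩, hmax⟩ := Set.Finite.exists_maximalFor φ _ hSfin hSne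
  have hact : B \ I ⊆ M.inA B := by
    rintro e ⟨heB, heI⟩
    have heE : e ∈ M.E := hB.subset_ground heB
    have hBd : M✶.IsBase (M.E \ B) := hB.compl_isBase_dual
    have heEB : e ∈ M✶.E \ (M.E \ B) := ⟨heE, fun h => h.2 heB⟩
    have hdep : M✶.Dep (insert e (M.E \ B)) := hBd.insert_dep heEB
    obtain ⟨C, hCs, hC⟩ := exists_cct_subset M✶ (insert e (M.E \ B)).ncard
      (hEfin.subset hdep.subset_ground) le_rfl hdep
    have heC : e ∈ C := by
      by_contra heC
      have hsub : C ⊆ M.E \ B := fun x hx =>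
        (hCs hx).resolve_left (fun h => heC (h ▸ hx))
      exact hC.1.not_indep (hBd.indep.subset hsub)
    refine ⟨heB, heEB, C, hC, hCs, ?_⟩
    intro f hfC
    by_contra hfe
    push_neg at hfe
    have hfne : f ≠ e := ne_of_gt hfe
    have hfEB : f ∈ M.E \ B := (hCs hfC).resolve_left hfne
    have hX : M✶.IsBase (insert e ((M.E \ B) \ {f})) :=
      cct_exchange (M := M✶) hEfin hBd heE (fun h => h.2 heB) hC hCs hfC hfne
    have hXc : M.IsBase (M.E \ insert e ((M.E \ B) \ {f})) := by
      have h2 := hX.compl_isBase_dual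
      rwa [Matroid.dual_dual] at h2
    have hset : M.E \ insert e ((M.E \ B) \ {f}) = insert f (B \ {e}) := by
      ext x
      simp only [Set.mem_diff, Set.mem_insert_iff, Set.mem_singleton_iff, not_or, not_and,
        not_not]
      constructor
      · rintro ⟨hxE, hxe, hx⟩
        by_cases hxf : x = f
        · exact Or.inl hxf
        · by_cases hxB : x ∈ B
          · exact Or.inr ⟨hxB, hxe⟩
          · exact Or.inl (hx ⟨hxE, hxB⟩)
      · rintro (rfl | ⟨hxB, hxe⟩)
        · exact ⟨hfEB.1, hfne, fun _ => rfl⟩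
        · exact ⟨hB.subset_ground hxB, hxe, fun h => absurd hxB h.2⟩
    rw [hset] at hXc
    have hmem : insert f (B \ {e}) ∈ {B | M.IsBase B ∧ I ⊆ B} :=
      ⟨hXc, fun x hx => Or.inr ⟨hIB hx, fun h => heI (h ▸ hx)⟩⟩
    have hlt : φ B < φ (insert f (B \ {e})) :=
      hφlt hB.subset_ground heB hfEB.1 hfEB.2 hfe
    exact absurd (hmax hmem hlt.le) (not_le.mpr hlt)
  refine ⟨⟨B, B \ I⟩, ⟨hB, hact, (Set.diff_diff_cancel_left hIB).symm⟩, ?_⟩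
  rintro ⟨B', Y'⟩ ⟨hB', hY', hIeq⟩
  have hY'B' : Y' ⊆ B' := fun y hy => (hY' hy).1
  have hIB' : I ⊆ B' := hIeq ▸ diff_subset
  have hY'eq : B' \ I = Y' := by
    rw [hIeq, Set.diff_diff_cancel_left hY'B']
  have hact' : B' \ I ⊆ M.inA B' := hY'eq ▸ hY'
  have hBB' : B' = B := crapo_base_unique hEfin hB' hB hIB' hIB hact' hact
  subst hBB'
  have : Y' = B' \ I := hY'eq.symm
  simp [this]
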